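/- (Subdifferential of a maximum via Lagrange multipliers) Let X be a semidivisible additive commutative group, k ≥ 1, and f₁,…,f_k : X → ℝ convex. Let f(x) = max_{1 ≤ i ≤ k} fᵢ(x), let x₀ ∈ X, and let I(x₀) = { i : fᵢ(x₀) = f(x₀) }. Then an additive map φ : X → ℝ belongs to ∂f(x₀) if and only if there exist nonnegative reals λ₁,…,λ_k with λᵢ = 0 for i ∉ I(x₀) and λ₁+⋯+λ_k = 1, and additive maps aᵢ ∈ ∂fᵢ(x₀) for i ∈ I(x₀), such that φ(x) = Σ_{i ∈ I(x₀)} λᵢ · aᵢ(x) for all x ∈ X; that is, ∂f(x₀) is the convex hull (with real coefficients, in the real vector space of additive maps X → ℝ) of ⋃_{i ∈ I(x₀)} ∂fᵢ(x₀). -/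

import Mathlib

open Finset


/-- A real-valued function on an additive commutative monoid is convex. -/
def RConvexFn {X : Type*} [AddCommMonoid X] (f : X → ℝ) : Prop :=
  ∀ (n : ℕ), 0 < n → ∀ m : Fin n → ℕ, (∀ i, 0 < m i) →
    ∀ (xs : Fin n → X) (x : X), (∑ i, m i) • x = ∑ i, m i • xs i →
      ((∑ i, m i : ℕ) : ℝ) * f x ≤ ∑ i, (m i : ℝ) * f (xs i)

/-- The subdifferential of `f` at `x₀`: additive maps `a : X → ℝ` with
`f(x₀) + a(h) ≤ f(x₀ + h)` for all `h`. -/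
def subdiff {X : Type*} [AddCommGroup X] (f : X → ℝ) (x₀ : X) : Set (X → ℝ) :=
  {a | (∀ x y, a (x + y) = a x + a y) ∧ ∀ h, f x₀ + a h ≤ f (x₀ + h)}

namespace SDMax

variable {X : Type*} [AddCommGroup X]

noncomputable section

/-- Bounded real-valued functions on `X`, as a submodule of `X → ℝ`. -/
def BddF (X : Type*) [AddCommGroup X] : Submodule ℝ (X → ℝ) where
  carrier := {g | ∃ C : ℝ, ∀ x, |g x| ≤ C}
  add_mem' := by
    rintro g h ⟨C, hC⟩ ⟨D, hD⟩
    exact ⟨C + D, fun x => (abs_add_le _ _).trans (add_le_add (hC x) (hD x))⟩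
  zero_mem' := ⟨0, fun x => by simp⟩
  smul_mem' := by
    rintro c g ⟨C, hC⟩
    exact ⟨|c| * C, fun x => by
      rw [Pi.smul_apply, smul_eq_mul, abs_mul]
      exact mul_le_mul_of_nonneg_left (hC x) (abs_nonneg c)⟩

instance : Nonempty X := ⟨0⟩

/-- average of `g` over translates by `y j`, supremum over base points. -/
def avgSup (g : X → ℝ) (n : ℕ) (y : Fin (n + 1) → X) : ℝ :=
  ⨆ x : X, (∑ j, g (x + y j)) / (n + 1)

theorem avg_abs_le {g : X → ℝ} {C : ℝ} (hC : ∀ x, |g x| ≤ C) (n : ℕ) (y : Fin (n + 1) → X)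
    (x : X) : |(∑ j, g (x + y j)) / (n + 1 : ℝ)| ≤ C := by
  have hpos : (0:ℝ) < (n:ℝ) + 1 := by positivity
  rw [abs_div, abs_of_pos hpos, div_le_iff₀ hpos]
  calc |∑ j, g (x + y j)| ≤ ∑ j, |g (x + y j)| := Finset.abs_sum_le_sum_abs _ _
    _ ≤ ∑ _j : Fin (n+1), C := Finset.sum_le_sum fun j _ => hC _
    _ = C * ((n:ℝ) + 1) := by
        rw [Finset.sum_const, card_univ, Fintype.card_fin, nsmul_eq_mul]
        push_cast; ring

theorem avg_bddAbove {g : X → ℝ} {C : ℝ} (hC : ∀ x, |g x| ≤ C) (n : ℕ) (y : Fin (n + 1) → X) :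
    BddAbove (Set.range fun x : X => (∑ j, g (x + y j)) / (n + 1 : ℝ)) := by
  refine ⟨C, ?_⟩
  rintro r ⟨x, rfl⟩
  exact (abs_le.1 (avg_abs_le hC n y x)).2

theorem avgSup_le {g : X → ℝ} {C : ℝ} (hC : ∀ x, |g x| ≤ C) (n : ℕ) (y : Fin (n + 1) → X) :
    avgSup g n y ≤ C :=
  ciSup_le fun x => (abs_le.1 (avg_abs_le hC n y x)).2

theorem le_avgSup {g : X → ℝ} {C : ℝ} (hC : ∀ x, |g x| ≤ C) (n : ℕ) (y : Fin (n + 1) → X) :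
    -C ≤ avgSup g n y :=
  le_trans (abs_le.1 (avg_abs_le hC n y 0)).1 (le_ciSup (avg_bddAbove hC n y) 0)

/-- the sublinear functional used to produce an invariant mean. -/
def meanN (g : X → ℝ) : ℝ :=
  sInf (Set.range fun ny : Σ n : ℕ, Fin (n + 1) → X => avgSup g ny.1 ny.2)

theorem meanN_bddBelow {g : X → ℝ} {C : ℝ} (hC : ∀ x, |g x| ≤ C) :
    BddBelow (Set.range fun ny : Σ n : ℕ, Fin (n + 1) → X => avgSup g ny.1 ny.2) := by
  refine ⟨-C, ?_⟩
  rintro r ⟨⟨n, y⟩, rfl⟩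
  exact le_avgSup hC n y

theorem meanN_le {g : X → ℝ} {C : ℝ} (hC : ∀ x, |g x| ≤ C) (n : ℕ) (y : Fin (n + 1) → X) :
    meanN g ≤ avgSup g n y :=
  csInf_le (meanN_bddBelow hC) ⟨⟨n, y⟩, rfl⟩

instance : Nonempty (Σ n : ℕ, Fin (n + 1) → X) := ⟨⟨0, fun _ => 0⟩⟩

theorem le_meanN {g : X → ℝ} {C : ℝ} (hC : ∀ x, |g x| ≤ C) : -C ≤ meanN g :=
  le_csInf (Set.range_nonempty _) (by
    rintro r ⟨⟨n, y⟩, rfl⟩; exact le_avgSup hC n y)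

theorem exists_avgSup_lt {g : X → ℝ} {C : ℝ} (hC : ∀ x, |g x| ≤ C) {c : ℝ} (hc : meanN g < c) :
    ∃ (n : ℕ) (y : Fin (n + 1) → X), avgSup g n y < c := by
  obtain ⟨r, ⟨⟨n, y⟩, rfl⟩, hr⟩ := exists_lt_of_csInf_lt (Set.range_nonempty _) hc
  exact ⟨n, y, hr⟩

theorem sum_prod_le {u : X → ℝ} {Cu : ℝ} (hCu : ∀ x, |u x| ≤ Cu) (n m : ℕ)
    (y : Fin (n + 1) → X) (z : Fin (m + 1) → X) (x : X) :
    ∑ q : Fin (n + 1) × Fin (m + 1), u (x + (y q.1 + z q.2)) ≤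
      ((m : ℝ) + 1) * (((n : ℝ) + 1) * avgSup u n y) := by
  rw [Fintype.sum_prod_type, Finset.sum_comm]
  have inner : ∀ b : Fin (m + 1),
      ∑ a : Fin (n + 1), u (x + (y a + z b)) ≤ ((n : ℝ) + 1) * avgSup u n y := by
    intro b
    have hb : (∑ a : Fin (n + 1), u ((x + z b) + y a)) / ((n : ℝ) + 1) ≤ avgSup u n y :=
      le_ciSup (avg_bddAbove hCu n y) (x + z b)
    rw [div_le_iff₀ (by positivity)] at hb
    calc ∑ a : Fin (n + 1), u (x + (y a + z b))
        = ∑ a : Fin (n + 1), u ((x + z b) + y a) :=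
          Finset.sum_congr rfl fun a _ => congrArg u (by abel)
      _ ≤ ((n : ℝ) + 1) * avgSup u n y := by linarith [hb]
  calc ∑ b : Fin (m+1), ∑ a : Fin (n+1), u (x + (y a + z b))
      ≤ ∑ _b : Fin (m+1), ((n : ℝ) + 1) * avgSup u n y :=
        Finset.sum_le_sum fun b _ => inner b
    _ = ((m : ℝ) + 1) * (((n : ℝ) + 1) * avgSup u n y) := by
        rw [Finset.sum_const, card_univ, Fintype.card_fin, nsmul_eq_mul]; push_cast; ring

theorem meanN_add {g h : X → ℝ} {C D : ℝ} (hC : ∀ x, |g x| ≤ C) (hD : ∀ x, |h x| ≤ D) :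
    meanN (g + h) ≤ meanN g + meanN h := by
  have hCD : ∀ x, |(g + h) x| ≤ C + D := fun x =>
    (abs_add_le _ _).trans (add_le_add (hC x) (hD x))
  refine le_of_forall_pos_le_add fun ε hε => ?_
  obtain ⟨n, y, hy⟩ := exists_avgSup_lt hC (lt_add_of_pos_right _ (half_pos hε) :
    meanN g < meanN g + ε / 2)
  obtain ⟨m, z, hz⟩ := exists_avgSup_lt hD (lt_add_of_pos_right _ (half_pos hε) :
    meanN h < meanN h + ε / 2)
  -- combined translate family indexed by `Fin (K+1)` with `K+1 = (n+1)*(m+1)`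
  set K : ℕ := n * m + n + m with hK
  have he : (n + 1) * (m + 1) = K + 1 := by ring
  let e : Fin (n + 1) × Fin (m + 1) ≃ Fin (K + 1) := finProdFinEquiv.trans (finCongr he)
  let w : Fin (K + 1) → X := fun j => y (e.symm j).1 + z (e.symm j).2
  have hsum : ∀ (u : X → ℝ) (x : X),
      ∑ j, u (x + w j) = ∑ q : Fin (n + 1) × Fin (m + 1), u (x + (y q.1 + z q.2)) := by
    intro u x
    rw [← Equiv.sum_comp e (fun j => u (x + w j))]
    refine Finset.sum_congr rfl fun q _ => ?_
    simp [w, Equiv.symm_apply_apply]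
  -- the combined average of `g + h` is dominated by `avgSup g n y + avgSup h m z`
  have hKcast : ((K : ℝ) + 1) = ((n : ℝ) + 1) * ((m : ℝ) + 1) := by
    have h9 := congrArg (fun x : ℕ => (x : ℝ)) he
    push_cast at h9; linarith
  have hKpos : (0:ℝ) < (K : ℝ) + 1 := by positivity
  have hA : avgSup (g + h) K w ≤ avgSup g n y + avgSup h m z := by
    refine ciSup_le fun x => ?_
    rw [div_le_iff₀ hKpos]
    have h1 : ∑ j, (g + h) (x + w j) =
        (∑ j, g (x + w j)) + ∑ j, h (x + w j) := by
      rw [← Finset.sum_add_distrib]; rfl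
    have h2 : ∑ j, g (x + w j) ≤ ((m : ℝ) + 1) * (((n : ℝ) + 1) * avgSup g n y) := by
      rw [hsum g x]; exact sum_prod_le hC n m y z x
    have h3 : ∑ j, h (x + w j) ≤ ((n : ℝ) + 1) * (((m : ℝ) + 1) * avgSup h m z) := by
      rw [hsum h x]
      have hswap : ∑ q : Fin (n + 1) × Fin (m + 1), h (x + (y q.1 + z q.2)) =
          ∑ q : Fin (m + 1) × Fin (n + 1), h (x + (z q.1 + y q.2)) := by
        rw [← Equiv.sum_comp (Equiv.prodComm (Fin (m+1)) (Fin (n+1)))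
          (fun q : Fin (n + 1) × Fin (m + 1) => h (x + (y q.1 + z q.2)))]
        exact Finset.sum_congr rfl fun q _ => congrArg h (by simp [Equiv.prodComm]; abel)
      rw [hswap]
      exact sum_prod_le hD m n z y x
    calc ∑ j, (g + h) (x + w j) ≤ ((n:ℝ)+1) * ((m:ℝ)+1) * (avgSup g n y + avgSup h m z) := by
          rw [h1]; nlinarith [h2, h3]
      _ = (avgSup g n y + avgSup h m z) * ((K:ℝ) + 1) := by rw [hKcast]; ring
  calc meanN (g + h) ≤ avgSup (g + h) K w := meanN_le hCD K w
    _ ≤ avgSup g n y + avgSup h m z := hA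
    _ ≤ meanN g + meanN h + ε := by linarith

theorem avgSup_smul {g : X → ℝ} {C : ℝ} (hC : ∀ x, |g x| ≤ C) {c : ℝ} (hc : 0 < c) (n : ℕ)
    (y : Fin (n + 1) → X) : avgSup (c • g) n y = c * avgSup g n y := by
  unfold avgSup
  have h1 : (fun x : X => (∑ j, (c • g) (x + y j)) / ((n:ℝ) + 1))
      = fun x : X => c * ((∑ j, g (x + y j)) / ((n:ℝ) + 1)) := by
    funext x
    simp only [Pi.smul_apply, smul_eq_mul, ← Finset.mul_sum, mul_div_assoc]
  rw [show (⨆ x : X, (∑ j, (c • g) (x + y j)) / ((n:ℝ) + 1))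
      = ⨆ x : X, c * ((∑ j, g (x + y j)) / ((n:ℝ) + 1)) from congrArg _ h1,
    ← Real.mul_iSup_of_nonneg hc.le]

theorem meanN_smul {g : X → ℝ} {C : ℝ} (hC : ∀ x, |g x| ≤ C) {c : ℝ} (hc : 0 < c) :
    meanN (c • g) = c * meanN g := by
  have hCc : ∀ x, |(c • g) x| ≤ |c| * C := fun x => by
    rw [Pi.smul_apply, smul_eq_mul, abs_mul]
    exact mul_le_mul_of_nonneg_left (hC x) (abs_nonneg c)
  refine le_antisymm ?_ ?_
  · refine le_of_forall_pos_le_add fun ε hε => ?_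
    obtain ⟨n, y, hy⟩ := exists_avgSup_lt hC
      (lt_add_of_pos_right _ (div_pos hε hc) : meanN g < meanN g + ε / c)
    calc meanN (c • g) ≤ avgSup (c • g) n y := meanN_le hCc n y
      _ = c * avgSup g n y := avgSup_smul hC hc n y
      _ ≤ c * (meanN g + ε / c) := mul_le_mul_of_nonneg_left hy.le hc.le
      _ = c * meanN g + ε := by field_simp
  · refine le_csInf (Set.range_nonempty _) ?_
    rintro r ⟨⟨n, y⟩, rfl⟩
    dsimp only
    rw [avgSup_smul hC hc n y]
    exact mul_le_mul_of_nonneg_left (meanN_le hC n y) hc.le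

theorem meanN_zero : meanN (0 : X → ℝ) = 0 := by
  have h0 : ∀ x : X, |(0 : X → ℝ) x| ≤ 0 := fun x => by simp
  refine le_antisymm ?_ (by simpa using le_meanN h0)
  have hz : avgSup (0 : X → ℝ) 0 (fun _ => (0:X)) = 0 := by
    unfold avgSup; simp
  calc meanN (0 : X → ℝ) ≤ avgSup 0 0 (fun _ => (0:X)) := meanN_le h0 0 _
    _ = 0 := hz

/-- Existence of a translation-invariant mean on the bounded functions on `X`. -/
theorem exists_mean : ∃ M : (BddF X) →ₗ[ℝ] ℝ,
    (∀ (g : BddF X) (c : ℝ), (∀ x, (g : X → ℝ) x ≤ c) → M g ≤ c) ∧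
    (∀ (g : BddF X) (c : ℝ), (∀ x, c ≤ (g : X → ℝ) x) → c ≤ M g) ∧
    (∀ (g g₁ : BddF X) (t : X), (∀ x, (g₁ : X → ℝ) x = (g : X → ℝ) (x + t)) → M g₁ = M g) := by
  classical
  have hN_hom : ∀ c : ℝ, 0 < c → ∀ g : BddF X, meanN ((c • g : BddF X) : X → ℝ)
      = c * meanN (g : X → ℝ) := by
    intro c hc g
    obtain ⟨C, hC⟩ := g.2
    have he : ((c • g : BddF X) : X → ℝ) = c • (g : X → ℝ) := rfl
    rw [he, meanN_smul hC hc]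
  have hN_add : ∀ g h : BddF X,
      meanN (((g + h : BddF X)) : X → ℝ) ≤ meanN (g : X → ℝ) + meanN (h : X → ℝ) := by
    intro g h
    obtain ⟨C, hC⟩ := g.2
    obtain ⟨D, hD⟩ := h.2
    have he : ((g + h : BddF X) : X → ℝ) = (g : X → ℝ) + (h : X → ℝ) := rfl
    rw [he]
    exact meanN_add hC hD
  obtain ⟨M, -, hM⟩ := exists_extension_of_le_sublinear
      (⟨⊥, 0⟩ : (BddF X) →ₗ.[ℝ] ℝ) (fun g => meanN (g : X → ℝ))
      (fun c hc g => hN_hom c hc g) hN_add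
      (fun x => by
        have hx : (((x : BddF X)) : X → ℝ) = 0 := by
          rcases x with ⟨x, hx⟩
          have hx0 : x = 0 := by simpa using hx
          simp [hx0]
        have hzero : (({ domain := ⊥, toFun := 0 } : (BddF X) →ₗ.[ℝ] ℝ)) x = 0 := rfl
        rw [hzero]
        show (0:ℝ) ≤ meanN (((x : BddF X)) : X → ℝ)
        rw [hx, meanN_zero])
  have hub : ∀ (g : BddF X) (c : ℝ), (∀ x, (g : X → ℝ) x ≤ c) → M g ≤ c := by
    intro g c hgc
    obtain ⟨C, hC⟩ := g.2
    refine (hM g).trans ?_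
    have h1 : avgSup (g : X → ℝ) 0 (fun _ => (0:X)) ≤ c := by
      refine ciSup_le fun x => ?_
      rw [show (∑ j : Fin 1, (g : X → ℝ) (x + (fun _ => (0:X)) j)) = (g : X → ℝ) x by simp]
      simpa using hgc x
    exact (meanN_le hC 0 _).trans h1
  have hlb : ∀ (g : BddF X) (c : ℝ), (∀ x, c ≤ (g : X → ℝ) x) → c ≤ M g := by
    intro g c hgc
    have h1 : M (-g) ≤ -c := hub (-g) (-c) (fun x => by
      have he : ((-g : BddF X) : X → ℝ) x = -((g : X → ℝ) x) := rfl
      rw [he]; exact neg_le_neg (hgc x))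
    rw [map_neg] at h1
    linarith
  refine ⟨M, hub, hlb, ?_⟩
  intro g g₁ t hgg
  obtain ⟨C, hC⟩ := g.2
  have hC0 : 0 ≤ C := le_trans (abs_nonneg _) (hC 0)
  have hd : ∀ n : ℕ, ∀ x : X,
      (∑ j : Fin (n+1), ((g₁ : X → ℝ) - (g : X → ℝ)) (x + (fun j : Fin (n+1) => (j : ℕ) • t) j))
        = (g : X → ℝ) (x + (n+1) • t) - (g : X → ℝ) x := by
    intro n x
    have hterm : ∀ j : Fin (n+1), ((g₁ : X → ℝ) - (g : X → ℝ)) (x + (j : ℕ) • t)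
        = (g : X → ℝ) (x + ((j : ℕ)+1) • t) - (g : X → ℝ) (x + (j : ℕ) • t) := by
      intro j
      have h1 : ((g₁ : X → ℝ) - (g : X → ℝ)) (x + (j : ℕ) • t)
          = (g : X → ℝ) ((x + (j : ℕ) • t) + t) - (g : X → ℝ) (x + (j : ℕ) • t) := by
        simp only [Pi.sub_apply, hgg]
      rw [h1]
      congr 2
      rw [succ_nsmul]; abel
    rw [Finset.sum_congr rfl fun j _ => hterm j]
    rw [Fin.sum_univ_eq_sum_range
      (fun j => (g : X → ℝ) (x + (j+1) • t) - (g : X → ℝ) (x + j • t))]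
    rw [Finset.sum_range_sub (fun j => (g : X → ℝ) (x + j • t))]
    simp
  have hdiffmem : ∀ x, |((g₁ - g : BddF X) : X → ℝ) x| ≤ 2 * C := by
    intro x
    have he : ((g₁ - g : BddF X) : X → ℝ) x = (g : X → ℝ) (x + t) - (g : X → ℝ) x := by
      have he2 : ((g₁ - g : BddF X) : X → ℝ) x = (g₁ : X → ℝ) x - (g : X → ℝ) x := rfl
      rw [he2, hgg]
    rw [he]
    calc |(g : X → ℝ) (x + t) - (g : X → ℝ) x| ≤ |(g : X → ℝ) (x + t)| + |(g : X → ℝ) x| :=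
          abs_sub _ _
      _ ≤ 2 * C := by linarith [hC (x + t), hC x]
  have hNle : ∀ (u : BddF X), (∀ n : ℕ, ∀ x : X,
      (∑ j : Fin (n+1), (u : X → ℝ) (x + (fun j : Fin (n+1) => (j : ℕ) • t) j)) ≤ 2 * C) →
      (∀ x, |(u : X → ℝ) x| ≤ 2 * C) → M u ≤ 0 := by
    intro u hu huC
    refine (hM u).trans ?_
    refine le_of_forall_pos_le_add fun ε hε => ?_
    obtain ⟨n, hn⟩ := exists_nat_gt (2 * C / ε)
    have hn1 : (2 * C) / ((n:ℝ)+1) < ε := by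
      rw [div_lt_iff₀ (by positivity)]
      have h2 : 2 * C / ε < (n:ℝ) + 1 := hn.trans (lt_add_one _)
      rw [div_lt_iff₀ hε] at h2
      linarith
    have h3 : avgSup (u : X → ℝ) n (fun j : Fin (n+1) => (j : ℕ) • t) ≤ (2*C) / ((n:ℝ)+1) := by
      refine ciSup_le fun x => ?_
      rw [div_le_div_iff_of_pos_right (by positivity)]
      exact hu n x
    calc meanN (u : X → ℝ) ≤ _ := meanN_le huC n _
      _ ≤ (2*C)/((n:ℝ)+1) := h3
      _ ≤ 0 + ε := by linarith
  have h1 : M (g₁ - g) ≤ 0 := by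
    refine hNle (g₁ - g) (fun n x => ?_) hdiffmem
    have he : ((g₁ - g : BddF X) : X → ℝ) = (g₁ : X → ℝ) - (g : X → ℝ) := rfl
    rw [he, hd n x]
    cases' abs_le.1 (hC (x + (n+1) • t)) with h2a h2b
    cases' abs_le.1 (hC x) with h3a h3b
    linarith
  have h2 : M (g - g₁) ≤ 0 := by
    have hdm : ∀ x, |((g - g₁ : BddF X) : X → ℝ) x| ≤ 2 * C := by
      intro x
      have he : ((g - g₁ : BddF X) : X → ℝ) x = -(((g₁ - g : BddF X) : X → ℝ) x) := by
        simp
      rw [he, abs_neg]; exact hdiffmem x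
    refine hNle (g - g₁) (fun n x => ?_) hdm
    have hsum : (∑ j : Fin (n+1), ((g - g₁ : BddF X) : X → ℝ)
        (x + (fun j : Fin (n+1) => (j : ℕ) • t) j))
        = -(∑ j : Fin (n+1), ((g₁ : X → ℝ) - (g : X → ℝ))
          (x + (fun j : Fin (n+1) => (j : ℕ) • t) j)) := by
      rw [← Finset.sum_neg_distrib]
      refine Finset.sum_congr rfl fun j _ => ?_
      have he : ((g - g₁ : BddF X) : X → ℝ) (x + (j:ℕ) • t)
          = -(((g₁ : X → ℝ) - (g : X → ℝ)) (x + (j:ℕ) • t)) := by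
        simp
      exact he
    rw [hsum, hd n x]
    cases' abs_le.1 (hC (x + (n+1) • t)) with h3a h3b
    cases' abs_le.1 (hC x) with h4a h4b
    linarith
  have h6 : M g₁ - M g = M (g₁ - g) := (map_sub M g₁ g).symm
  have h7 : M g - M g₁ = M (g - g₁) := (map_sub M g g₁).symm
  linarith

/-- **Sandwich theorem**: an additive function between a superadditive and a subadditive one. -/
theorem sandwich (p q : X → ℝ) (hp : ∀ x y, p (x + y) ≤ p x + p y)
    (hq : ∀ x y, q x + q y ≤ q (x + y)) (hq0 : q 0 = 0) (hqp : ∀ x, q x ≤ p x) :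
    ∃ b : X → ℝ, (∀ x y, b (x + y) = b x + b y) ∧ (∀ x, q x ≤ b x) ∧ ∀ x, b x ≤ p x := by
  obtain ⟨M, hub, hlb, hinv⟩ := exists_mean (X := X)
  set r : X → ℝ := fun x => sInf (Set.range fun y => p (x + y) - q y) with hr
  have hlow : ∀ x y, q x ≤ p (x + y) - q y := fun x y => by
    have := hq x y
    have := hqp (x + y)
    linarith
  have hbdd : ∀ x, BddBelow (Set.range fun y => p (x + y) - q y) := fun x =>
    ⟨q x, by rintro v ⟨y, rfl⟩; exact hlow x y⟩
  have hrq : ∀ x, q x ≤ r x := fun x =>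
    le_csInf (Set.range_nonempty _) (by rintro v ⟨y, rfl⟩; exact hlow x y)
  have hrle : ∀ x y, r x ≤ p (x + y) - q y := fun x y => csInf_le (hbdd x) ⟨y, rfl⟩
  have hrp : ∀ x, r x ≤ p x := fun x => by
    have := hrle x 0
    rw [add_zero, hq0] at this
    linarith
  have hkey : ∀ x y, q x + r y ≤ r (x + y) := by
    intro x y
    refine le_csInf (Set.range_nonempty _) ?_
    rintro v ⟨z, rfl⟩
    dsimp only
    have h1 : r y ≤ p (y + (x + z)) - q (x + z) := hrle y (x + z)
    have h2 : q x + q z ≤ q (x + z) := hq x z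
    have h3 : p (y + (x + z)) = p (x + y + z) := congrArg p (by abel)
    rw [h3] at h1
    linarith
  have hrsub : ∀ x y, r (x + y) ≤ r x + r y := by
    intro x y
    refine le_of_forall_pos_le_add fun ε hε => ?_
    obtain ⟨v₁, ⟨y₁, rfl⟩, h1⟩ := exists_lt_of_csInf_lt (Set.range_nonempty _)
      (lt_add_of_pos_right (r x) (half_pos hε))
    obtain ⟨v₂, ⟨y₂, rfl⟩, h2⟩ := exists_lt_of_csInf_lt (Set.range_nonempty _)
      (lt_add_of_pos_right (r y) (half_pos hε))
    dsimp only at h1 h2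
    have h3 : r (x + y) ≤ p (x + y + (y₁ + y₂)) - q (y₁ + y₂) := hrle (x + y) (y₁ + y₂)
    have h4 : p (x + y + (y₁ + y₂)) ≤ p (x + y₁) + p (y + y₂) := by
      have he : x + y + (y₁ + y₂) = (x + y₁) + (y + y₂) := by abel
      rw [he]; exact hp _ _
    have h5 : q y₁ + q y₂ ≤ q (y₁ + y₂) := hq y₁ y₂
    linarith
  -- the translate differences of `r` are bounded
  have hWb : ∀ x z, q x ≤ r (x + z) - r z ∧ r (x + z) - r z ≤ r x := fun x z =>
    ⟨by have := hkey x z; linarith, by have := hrsub x z; linarith⟩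
  have hWmem : ∀ x, (fun z => r (x + z) - r z) ∈ BddF X := by
    intro x
    refine ⟨|r x| + |q x|, fun z => abs_le.2 ⟨?_, ?_⟩⟩
    all_goals dsimp only
    · have := (hWb x z).1
      have h1 : -|q x| ≤ q x := neg_abs_le _
      have h2 : (0:ℝ) ≤ |r x| := abs_nonneg _
      linarith
    · have := (hWb x z).2
      have h1 : r x ≤ |r x| := le_abs_self _
      have h2 : (0:ℝ) ≤ |q x| := abs_nonneg _
      linarith
  set W : X → BddF X := fun x => ⟨fun z => r (x + z) - r z, hWmem x⟩ with hW
  refine ⟨fun x => M (W x), ?_, ?_, ?_⟩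
  · intro x x'
    have hmem' : (fun z => (W x : X → ℝ) (z + x')) ∈ BddF X := by
      obtain ⟨C, hC⟩ := hWmem x
      exact ⟨C, fun z => hC (z + x')⟩
    set T : BddF X := ⟨fun z => (W x : X → ℝ) (z + x'), hmem'⟩ with hT
    have hdec : W (x + x') = T + W x' := by
      apply Subtype.ext
      funext z
      show r (x + x' + z) - r z = (r (x + (z + x')) - r (z + x')) + (r (x' + z) - r z)
      have e1 : x + (z + x') = x + x' + z := by abel
      have e2 : x' + z = z + x' := by abel
      rw [e1, e2]
      ring
    show M (W (x + x')) = M (W x) + M (W x')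
    rw [hdec, map_add]
    have hinv1 : M T = M (W x) := hinv (W x) T x' (fun z => rfl)
    rw [hinv1]
  · intro x
    exact hlb (W x) (q x) (fun z => (hWb x z).1)
  · intro x
    exact le_trans (hub (W x) (r x) (fun z => (hWb x z).2)) (hrp x)


/-- Decomposition: an additive function below a nonnegative combination of subadditive
functions splits as the corresponding combination of additive functions below each. -/
theorem decomp {ι : Type*} [DecidableEq ι] (t : Finset ι) (lam : ι → ℝ)
    (hlam : ∀ i, 0 ≤ lam i) (D : ι → X → ℝ)
    (hsub : ∀ i, ∀ x y, D i (x + y) ≤ D i x + D i y) (hD0 : ∀ i, D i 0 = 0)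
    (c : X → ℝ) (hc : ∀ x y, c (x + y) = c x + c y)
    (hle : ∀ x, c x ≤ ∑ i ∈ t, lam i * D i x) :
    ∃ b : ι → X → ℝ, (∀ i ∈ t, (∀ x y, b i (x + y) = b i x + b i y) ∧ ∀ x, b i x ≤ D i x) ∧
      ∀ x, (∑ i ∈ t, lam i * b i x) = c x := by
  induction t using Finset.induction generalizing c with
  | empty =>
    have hc0 : c 0 = 0 := by
      have := hc 0 0; simpa using this.symm
    have hz : ∀ x, c x = 0 := by
      intro x
      have h1 : c x ≤ 0 := by simpa using hle x
      have h2 : c (-x) ≤ 0 := by simpa using hle (-x)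
      have h3 : c x + c (-x) = 0 := by rw [← hc]; simpa using hc0
      linarith
    exact ⟨fun _ => 0, fun i hi => absurd hi (Finset.notMem_empty i), fun x => by
      simp [hz x]⟩
  | @insert a t ha ih =>
    rcases eq_or_lt_of_le (hlam a) with h0 | hpos
    · -- weight zero : use a trivial sandwich for `D a`
      obtain ⟨ba, hba_add, hba_lb, hba_ub⟩ := sandwich (D a) (fun x => -(D a (-x)))
        (hsub a)
        (fun x y => by
          have h1 := hsub a (-x) (-y)
          show -(D a (-x)) + -(D a (-y)) ≤ -(D a (-(x+y)))
          have he : -(x + y) = -x + -y := by abel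
          rw [he]; linarith)
        (by show -(D a (-(0:X))) = 0; simp [hD0 a])
        (fun x => by
          show -(D a (-x)) ≤ D a x
          have h1 := hsub a x (-x)
          have h2 : D a (x + -x) = 0 := by
            rw [show x + -x = (0:X) by abel, hD0 a]
          linarith)
      obtain ⟨b, hb, hbsum⟩ := ih c hc (fun x => by
        have := hle x
        rw [Finset.sum_insert ha, ← h0] at this
        simpa using this)
      refine ⟨fun i => if i = a then ba else b i, ?_, ?_⟩
      · intro i hi
        rcases Finset.mem_insert.1 hi with rfl | hi'
        · simp only [if_pos rfl]
          exact ⟨hba_add, hba_ub⟩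
        · have hne : i ≠ a := fun he => ha (he ▸ hi')
          simp only [if_neg hne]
          exact hb i hi'
      · intro x
        rw [Finset.sum_insert ha]
        have h1 : ∑ i ∈ t, lam i * (if i = a then ba else b i) x = ∑ i ∈ t, lam i * b i x :=
          Finset.sum_congr rfl fun i hi => by
            have hne : i ≠ a := fun he => ha (he ▸ hi)
            rw [if_neg hne]
        rw [h1, hbsum x]
        simp [← h0]
    · -- positive weight
      set S : X → ℝ := fun x => ∑ i ∈ t, lam i * D i x with hS
      have hSsub : ∀ x y, S (x + y) ≤ S x + S y := by
        intro x y
        rw [hS]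
        simp only
        rw [← Finset.sum_add_distrib]
        refine Finset.sum_le_sum fun i _ => ?_
        have := hsub i x y
        have h2 := hlam i
        nlinarith
      have hS0 : S 0 = 0 := by
        rw [hS]; simp only; refine Finset.sum_eq_zero fun i _ => by rw [hD0 i]; ring
      have hc0 : c 0 = 0 := by
        have := hc 0 0; simpa using this.symm
      obtain ⟨ba, hba_add, hba_lb, hba_ub⟩ := sandwich (D a)
        (fun x => (c x - S x) / lam a)
        (hsub a)
        (fun x y => by
          have h1 := hSsub x y
          have h2 : c (x + y) = c x + c y := hc x y
          show (c x - S x) / lam a + (c y - S y) / lam a ≤ (c (x+y) - S (x+y)) / lam a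
          rw [← add_div, div_le_div_iff_of_pos_right hpos]
          linarith)
        (by show (c 0 - S 0) / lam a = 0; rw [hc0, hS0]; simp)
        (fun x => by
          show (c x - S x) / lam a ≤ D a x
          rw [div_le_iff₀ hpos]
          have := hle x
          rw [Finset.sum_insert ha] at this
          rw [hS]
          simp only
          linarith)
      obtain ⟨b, hb, hbsum⟩ := ih (fun x => c x - lam a * ba x)
        (fun x y => by show c (x+y) - lam a * ba (x+y) = _; rw [hc, hba_add]; ring)
        (fun x => by
          show c x - lam a * ba x ≤ _
          have h1 : (c x - S x) / lam a ≤ ba x := hba_lb x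
          rw [div_le_iff₀ hpos] at h1
          rw [hS] at h1
          simp only at h1
          nlinarith [h1])
      refine ⟨fun i => if i = a then ba else b i, ?_, ?_⟩
      · intro i hi
        rcases Finset.mem_insert.1 hi with rfl | hi'
        · simp only [if_pos rfl]
          exact ⟨hba_add, hba_ub⟩
        · have hne : i ≠ a := fun he => ha (he ▸ hi')
          simp only [if_neg hne]
          exact hb i hi'
      · intro x
        rw [Finset.sum_insert ha]
        have h1 : ∑ i ∈ t, lam i * (if i = a then ba else b i) x = ∑ i ∈ t, lam i * b i x :=
          Finset.sum_congr rfl fun i hi => by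
            have hne : i ≠ a := fun he => ha (he ▸ hi)
            rw [if_neg hne]
        show lam a * (if a = a then ba else b a) x + _ = c x
        rw [if_pos rfl, h1, hbsum x]
        ring

/-- two-point convexity inequality (one point being `0`). -/
theorem conv_pair {F : X → ℝ} (hF : RConvexFn F) {m t : ℕ} (hm : 0 < m) {x u : X}
    (h : (m + t) • x = m • u) :
    ((m + t : ℕ) : ℝ) * F x ≤ (m : ℝ) * F u + (t : ℝ) * F 0 := by
  rcases Nat.eq_zero_or_pos t with rfl | ht
  · have := hF 1 one_pos (fun _ => m) (fun _ => hm) (fun _ => u) x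
      (by simpa using (by simpa using h))
    simpa using this
  · have := hF 2 two_pos ![m, t]
      (fun i => by fin_cases i <;> simpa)
      ![u, 0] x
      (by
        rw [Fin.sum_univ_two, Fin.sum_univ_two]
        simpa using h)
    rw [Fin.sum_univ_two, Fin.sum_univ_two] at this
    simpa using this

/-- three-point convexity inequality with a `0` slot. -/
theorem conv_triple {F : X → ℝ} (hF : RConvexFn F) {m₁ m₂ t : ℕ} (hm₁ : 0 < m₁)
    (hm₂ : 0 < m₂) {x u v : X} (h : (m₁ + m₂ + t) • x = m₁ • u + m₂ • v) :
    ((m₁ + m₂ + t : ℕ) : ℝ) * F x ≤ (m₁ : ℝ) * F u + (m₂ : ℝ) * F v + (t : ℝ) * F 0 := by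
  rcases Nat.eq_zero_or_pos t with rfl | ht
  · have := hF 2 two_pos ![m₁, m₂]
      (fun i => by fin_cases i <;> simpa) ![u, v] x
      (by rw [Fin.sum_univ_two, Fin.sum_univ_two]; simpa using h)
    rw [Fin.sum_univ_two, Fin.sum_univ_two] at this
    simpa using this
  · have := hF 3 three_pos ![m₁, m₂, t]
      (fun i => by fin_cases i <;> simpa) ![u, v, 0] x
      (by
        rw [Fin.sum_univ_three, Fin.sum_univ_three]
        simpa using h)
    rw [Fin.sum_univ_three, Fin.sum_univ_three] at this
    simpa using this

/-- convex functions are constant on cosets of torsion. -/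
theorem conv_const {F : X → ℝ} (hF : RConvexFn F) {n : ℕ} (hn : 0 < n) {x y : X}
    (h : n • x = n • y) : F x = F y := by
  have key : ∀ {a b : X}, n • a = n • b → F a ≤ F b := by
    intro a b hab
    have := hF 1 one_pos (fun _ => n) (fun _ => hn) (fun _ => b) a (by simpa using hab)
    simp only [Finset.sum_const, Finset.card_univ, Fintype.card_fin, one_smul,
      Fin.sum_univ_one] at this
    have hn' : (0:ℝ) < (n:ℝ) := by exact_mod_cast hn
    nlinarith [this]
  exact le_antisymm (key h) (key h.symm)

section Dderiv

variable {p : ℕ} {s : X → X}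

theorem iter_smul (hs : ∀ x, p • s x = x) : ∀ (n : ℕ) (x : X), p ^ n • (s^[n] x) = x := by
  intro n
  induction n with
  | zero => intro x; simp
  | succ n ih =>
    intro x
    rw [Function.iterate_succ_apply', pow_succ, mul_smul, hs, ih]

/-- the scaled sequence whose infimum is the derivative at `0`. -/
def cSeq (p : ℕ) (s : X → X) (F : X → ℝ) (n : ℕ) (h : X) : ℝ :=
  ((p : ℝ) ^ n) * F (s^[n] h)

/-- derivative of F at 0 -/
def Dfun (p : ℕ) (s : X → X) (F : X → ℝ) (h : X) : ℝ :=
  sInf (Set.range fun n => cSeq p s F n h)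

variable (hp : 1 < p) (hs : ∀ x, p • s x = x) {F : X → ℝ} (hF : RConvexFn F) (hF0 : F 0 = 0)
include hp hs hF hF0

theorem cSeq_zero (h : X) : cSeq p s F 0 h = F h := by simp [cSeq]

theorem cSeq_succ_le (n : ℕ) (h : X) : cSeq p s F (n + 1) h ≤ cSeq p s F n h := by
  have hppos : 0 < p := lt_trans one_pos hp
  have e1 : F (p • s^[n+1] h) = F (s^[n] h) := by
    refine conv_const hF (n := p ^ n) (pow_pos hppos n) ?_
    rw [← mul_smul, ← pow_succ, iter_smul hs (n+1) h, iter_smul hs n h]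
  have e2 : ((1 + (p - 1) : ℕ) : ℝ) * F (s^[n+1] h)
      ≤ ((1:ℕ) : ℝ) * F (p • s^[n+1] h) + ((p - 1 : ℕ) : ℝ) * F 0 := by
    refine conv_pair hF one_pos ?_
    rw [Nat.add_sub_cancel' hp.le]
    simp
  rw [Nat.add_sub_cancel' hp.le] at e2
  rw [hF0, e1] at e2
  have e3 : (p : ℝ) * F (s^[n+1] h) ≤ F (s^[n] h) := by
    have : ((p:ℕ):ℝ) * F (s^[n+1] h) ≤ ((1:ℕ):ℝ) * F (s^[n] h) + ((p-1:ℕ):ℝ) * 0 := e2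
    simpa using this
  show ((p:ℝ) ^ (n+1)) * F (s^[n+1] h) ≤ ((p:ℝ) ^ n) * F (s^[n] h)
  rw [pow_succ]
  calc (p:ℝ) ^ n * (p:ℝ) * F (s^[n+1] h) = (p:ℝ)^n * ((p:ℝ) * F (s^[n+1] h)) := by ring
    _ ≤ (p:ℝ)^n * F (s^[n] h) := by
        have : (0:ℝ) ≤ (p:ℝ)^n := by positivity
        nlinarith [e3]

theorem cSeq_anti : ∀ (h : X), Antitone fun n => cSeq p s F n h := fun h =>
  antitone_nat_of_succ_le fun n => cSeq_succ_le hp hs hF hF0 n h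

theorem cSeq_lb (n : ℕ) (h : X) : -(F (-h)) ≤ cSeq p s F n h := by
  have hppos : 0 < p := lt_trans one_pos hp
  have hkey : (0:ℝ) ≤ F (s^[n] h) + F (s^[n] (-h)) := by
    have := hF 2 two_pos ![p ^ n, p ^ n]
      (fun i => by fin_cases i <;> simpa using pow_pos hppos n)
      ![s^[n] h, s^[n] (-h)] 0
      (by
        rw [Fin.sum_univ_two, Fin.sum_univ_two]
        simp only [Matrix.cons_val_zero, Matrix.cons_val_one, Matrix.head_cons]
        rw [iter_smul hs n h, iter_smul hs n (-h)]
        simp)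
    rw [Fin.sum_univ_two, Fin.sum_univ_two] at this
    simp only [Matrix.cons_val_zero, Matrix.cons_val_one, Matrix.head_cons, hF0] at this
    have hpn : (0:ℝ) < ((p^n : ℕ):ℝ) := by exact_mod_cast pow_pos hppos n
    nlinarith [this]
  have h2 : cSeq p s F n (-h) ≤ F (-h) := by
    have := cSeq_anti hp hs hF hF0 (-h) (Nat.zero_le n)
    dsimp only at this
    rwa [cSeq_zero hp hs hF hF0 (-h)] at this
  have h3 : 0 ≤ cSeq p s F n h + cSeq p s F n (-h) := by
    show 0 ≤ ((p:ℝ)^n) * F (s^[n] h) + ((p:ℝ)^n) * F (s^[n] (-h))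
    have : (0:ℝ) ≤ (p:ℝ)^n := by positivity
    nlinarith [hkey]
  linarith

theorem Dfun_bddBelow (h : X) : BddBelow (Set.range fun n => cSeq p s F n h) :=
  ⟨-(F (-h)), by rintro v ⟨n, rfl⟩; exact cSeq_lb hp hs hF hF0 n h⟩

theorem Dfun_le (n : ℕ) (h : X) : Dfun p s F h ≤ cSeq p s F n h :=
  csInf_le (Dfun_bddBelow hp hs hF hF0 h) ⟨n, rfl⟩

theorem Dfun_le_self (h : X) : Dfun p s F h ≤ F h := by
  have := Dfun_le hp hs hF hF0 0 h
  rwa [cSeq_zero hp hs hF hF0] at this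

theorem Dfun_zero : Dfun p s F 0 = 0 := by
  have hppos : 0 < p := lt_trans one_pos hp
  have hc : ∀ n, cSeq p s F n 0 = 0 := by
    intro n
    have : F (s^[n] 0) = F 0 := by
      refine conv_const hF (n := p^n) (pow_pos hppos n) ?_
      rw [iter_smul hs n 0]; simp
    show ((p:ℝ)^n) * F (s^[n] 0) = 0
    rw [this, hF0, mul_zero]
  refine le_antisymm ?_ ?_
  · have := Dfun_le hp hs hF hF0 0 0
    rwa [hc 0] at this
  · refine le_csInf (Set.range_nonempty _) ?_
    rintro v ⟨n, rfl⟩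
    dsimp only
    rw [hc n]

theorem Dfun_subadd (a b : X) : Dfun p s F (a + b) ≤ Dfun p s F a + Dfun p s F b := by
  have hppos : 0 < p := lt_trans one_pos hp
  have hstep : ∀ n, cSeq p s F (n+1) (a + b) ≤ cSeq p s F n a + cSeq p s F n b := by
    intro n
    have e0 : F (s^[n+1] (a + b)) = F (s^[n+1] a + s^[n+1] b) := by
      refine conv_const hF (n := p^(n+1)) (pow_pos hppos (n+1)) ?_
      rw [iter_smul hs (n+1) (a+b), smul_add, iter_smul hs (n+1) a, iter_smul hs (n+1) b]
    have e1 : ((1 + 1 + (p - 2) : ℕ) : ℝ) * F (s^[n+1] a + s^[n+1] b)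
        ≤ ((1:ℕ):ℝ) * F (p • s^[n+1] a) + ((1:ℕ):ℝ) * F (p • s^[n+1] b) + ((p-2:ℕ):ℝ) * F 0 := by
      refine conv_triple hF one_pos one_pos ?_
      have h2 : 1 + 1 + (p - 2) = p := by omega
      rw [h2, smul_add]
      simp
    have h2 : 1 + 1 + (p - 2) = p := by omega
    rw [h2, hF0] at e1
    have e2 : F (p • s^[n+1] a) = F (s^[n] a) := by
      refine conv_const hF (n := p^n) (pow_pos hppos n) ?_
      rw [← mul_smul, ← pow_succ, iter_smul hs (n+1) a, iter_smul hs n a]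
    have e3 : F (p • s^[n+1] b) = F (s^[n] b) := by
      refine conv_const hF (n := p^n) (pow_pos hppos n) ?_
      rw [← mul_smul, ← pow_succ, iter_smul hs (n+1) b, iter_smul hs n b]
    rw [e2, e3] at e1
    have e4 : (p:ℝ) * F (s^[n+1] (a+b)) ≤ F (s^[n] a) + F (s^[n] b) := by
      rw [e0]
      have := e1
      simpa using this
    show ((p:ℝ)^(n+1)) * F (s^[n+1] (a+b)) ≤ ((p:ℝ)^n) * F (s^[n] a) + ((p:ℝ)^n) * F (s^[n] b)
    have hpn : (0:ℝ) ≤ (p:ℝ)^n := by positivity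
    calc ((p:ℝ)^(n+1)) * F (s^[n+1] (a+b)) = (p:ℝ)^n * ((p:ℝ) * F (s^[n+1] (a+b))) := by
          rw [pow_succ]; ring
      _ ≤ (p:ℝ)^n * (F (s^[n] a) + F (s^[n] b)) := by nlinarith [e4]
      _ = ((p:ℝ)^n) * F (s^[n] a) + ((p:ℝ)^n) * F (s^[n] b) := by ring
  refine le_of_forall_pos_le_add fun ε hε => ?_
  obtain ⟨v₁, ⟨n₁, rfl⟩, h1⟩ := exists_lt_of_csInf_lt (Set.range_nonempty _)
    (lt_add_of_pos_right (Dfun p s F a) (half_pos hε))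
  obtain ⟨v₂, ⟨n₂, rfl⟩, h2⟩ := exists_lt_of_csInf_lt (Set.range_nonempty _)
    (lt_add_of_pos_right (Dfun p s F b) (half_pos hε))
  dsimp only at h1 h2
  set n := max n₁ n₂
  have h3 : cSeq p s F n a ≤ cSeq p s F n₁ a := cSeq_anti hp hs hF hF0 a (le_max_left _ _)
  have h4 : cSeq p s F n b ≤ cSeq p s F n₂ b := cSeq_anti hp hs hF hF0 b (le_max_right _ _)
  have h5 : Dfun p s F (a + b) ≤ cSeq p s F (n+1) (a+b) := Dfun_le hp hs hF hF0 (n+1) (a+b)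
  have h6 := hstep n
  linarith

end Dderiv

/-- Finite-dimensional separation: if the convex hull of `C ⊆ ℝ^ι` misses the open negative
orthant, there is a probability vector `lam` with `⟨lam, v⟩ ≥ 0` on `C`. -/
theorem separation {ι : Type*} [Fintype ι] [Nonempty ι] (C : Set (ι → ℝ))
    (hC : ∀ v ∈ convexHull ℝ C, ∃ i, 0 ≤ v i) :
    ∃ lam : ι → ℝ, (∀ i, 0 ≤ lam i) ∧ (∑ i, lam i) = 1 ∧ ∀ v ∈ C, 0 ≤ ∑ i, lam i * v i := by
  classical
  rcases C.eq_empty_or_nonempty with rfl | ⟨v₀, hv₀⟩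
  · refine ⟨fun _ => 1 / (Fintype.card ι : ℝ), fun i => by positivity, ?_, by simp⟩
    rw [Finset.sum_const, card_univ, nsmul_eq_mul]
    have h0 : (0:ℝ) < (Fintype.card ι : ℝ) := by
      exact_mod_cast Fintype.card_pos
    field_simp
  set O : Set (ι → ℝ) := Set.pi Set.univ (fun _ => Set.Iio (0:ℝ)) with hO
  have hOopen : IsOpen O := isOpen_set_pi Set.finite_univ fun _ _ => isOpen_Iio
  have hOconv : Convex ℝ O := convex_pi fun i _ => convex_Iio 0
  have hdisj : Disjoint O (convexHull ℝ C) := by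
    rw [Set.disjoint_left]
    intro v hvO hvC
    obtain ⟨i, hi⟩ := hC v hvC
    have := (Set.mem_univ_pi.1 hvO) i
    exact absurd this (by simpa using hi)
  obtain ⟨f, u, hfO, hfC⟩ := geometric_hahn_banach_open hOconv hOopen
    (convex_convexHull ℝ C) hdisj
  set lam' : ι → ℝ := fun i => f (Pi.single i 1) with hlam'
  have hrepr : ∀ v : ι → ℝ, f v = ∑ i, v i * lam' i := by
    intro v
    have hv : v = ∑ i, v i • (Pi.single i (1:ℝ) : ι → ℝ) := by
      funext j
      rw [Finset.sum_apply]
      rw [Finset.sum_eq_single j]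
      · simp
      · intro i _ hij
        simp [Pi.single_apply, hij]
      · intro hj; exact absurd (Finset.mem_univ j) hj
    conv_lhs => rw [hv]
    rw [map_sum]
    exact Finset.sum_congr rfl fun i _ => by rw [map_smul]; simp [hlam']
  have hnonpos : ∀ w : ι → ℝ, (∀ i, w i ≤ 0) → f w ≤ u := by
    intro w hw
    have hmem : ∀ ε : ℝ, 0 < ε → (w - fun _ => ε) ∈ O := by
      intro ε hε
      intro i _
      simp only [Pi.sub_apply]
      have := hw i
      simp only [Set.mem_Iio]
      linarith
    -- f w - ε f 1 < u for all ε > 0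
    have hone : ∀ ε : ℝ, 0 < ε → f w - ε * f (fun _ => (1:ℝ)) < u := by
      intro ε hε
      have h1 := hfO _ (hmem ε hε)
      have h2 : (w - fun _ => ε) = w - ε • (fun _ => (1:ℝ)) := by
        funext j; simp
      rw [h2, map_sub, map_smul] at h1
      simpa using h1
    by_contra hcon
    push_neg at hcon
    have hδ : 0 < f w - u := by linarith
    rcases le_or_gt (f (fun _ => (1:ℝ))) 0 with h3 | h3
    · have := hone 1 one_pos
      nlinarith
    · have := hone ((f w - u) / (2 * f (fun _ => (1:ℝ)))) (by positivity)
      have h4 : ((f w - u) / (2 * f (fun _ => (1:ℝ)))) * f (fun _ => (1:ℝ))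
          = (f w - u) / 2 := by field_simp
      rw [h4] at this
      linarith
  have hu0 : 0 ≤ u := by
    have := hnonpos 0 (fun i => le_rfl)
    rw [map_zero] at this
    linarith
  have hlampos : ∀ i, 0 ≤ lam' i := by
    intro i
    by_contra hcon
    push_neg at hcon
    set t : ℝ := (u + 1) / (-(lam' i)) with ht
    have htpos : 0 < t := by
      apply div_pos; linarith; linarith
    have hw : ∀ j, ((-t) • (Pi.single i (1:ℝ) : ι → ℝ)) j ≤ 0 := by
      intro j
      simp only [Pi.smul_apply, smul_eq_mul]
      rcases eq_or_ne i j with rfl | hij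
      · simp; positivity
      · simp [Pi.single_apply, Ne.symm hij]
    have h1 := hnonpos _ hw
    rw [map_smul] at h1
    have h2 : (-t) * lam' i = u + 1 := by
      have hl : -lam' i ≠ 0 := by simp only [ne_eq, neg_eq_zero]; intro h; rw [h] at hcon; linarith
      rw [ht]
      rw [neg_mul, div_mul_eq_mul_div, div_neg, neg_neg, mul_div_assoc,
        div_self (neg_ne_zero.mp hl), mul_one]
    have h3 : ((-t) • (f (Pi.single i 1)) : ℝ) = (-t) * lam' i := by
      simp [hlam']
    rw [h3, h2] at h1
    linarith
  have hTpos : 0 < ∑ i, lam' i := by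
    rcases lt_or_ge 0 (∑ i, lam' i) with h | h
    · exact h
    · exfalso
      have hT0 : ∑ i, lam' i = 0 :=
        le_antisymm h (Finset.sum_nonneg fun i _ => hlampos i)
      have hzero : ∀ i, lam' i = 0 := by
        intro i
        have := Finset.sum_eq_zero_iff_of_nonneg (fun j _ => hlampos j) |>.1 hT0 i
          (Finset.mem_univ i)
        exact this
      have hf0 : ∀ v : ι → ℝ, f v = 0 := by
        intro v
        rw [hrepr v]
        exact Finset.sum_eq_zero fun i _ => by rw [hzero i]; ring
      have h1 : f (fun _ => (-1:ℝ)) < u := hfO _ (fun i _ => by simp)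
      have h2 : u ≤ f v₀ := hfC v₀ (subset_convexHull ℝ C hv₀)
      rw [hf0 (fun _ => (-1:ℝ))] at h1
      rw [hf0 v₀] at h2
      linarith
  refine ⟨fun i => lam' i / (∑ j, lam' j), fun i => div_nonneg (hlampos i) hTpos.le, ?_, ?_⟩
  · show (∑ i, lam' i / (∑ j, lam' j)) = 1
    rw [← Finset.sum_div]
    field_simp
  · intro v hv
    show 0 ≤ ∑ i, (lam' i / (∑ j, lam' j)) * v i
    have h1 : u ≤ f v := hfC v (subset_convexHull ℝ C hv)
    have h2 : 0 ≤ f v := le_trans hu0 h1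
    rw [hrepr v] at h2
    have h3 : ∑ i, (lam' i / (∑ j, lam' j)) * v i = (∑ i, v i * lam' i) / (∑ j, lam' j) := by
      rw [Finset.sum_div]
      exact Finset.sum_congr rfl fun i _ => by
        rw [div_mul_eq_mul_div, mul_comm (lam' i) (v i)]
    rw [h3]
    positivity

set_option maxHeartbeats 2000000 in
/-- Key geometric input: the convex hull of the "epigraph values" set misses the open
negative orthant, thanks to `p`-divisibility and convexity. -/
theorem hull_nonneg {ι : Type*} [Fintype ι] [Nonempty ι] {p : ℕ} {s : X → X}
    (hp : 1 < p) (hs : ∀ x, p • s x = x) (Fa : ι → X → ℝ) (hFa : ∀ i, RConvexFn (Fa i))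
    (hpos : ∀ h, ∃ i, 0 ≤ Fa i h) :
    ∀ v ∈ convexHull ℝ {v : ι → ℝ | ∃ h, ∀ i, Fa i h ≤ v i}, ∃ i, 0 ≤ v i := by
  classical
  intro v hv
  by_contra hcon
  push_neg at hcon
  rw [_root_.convexHull_eq] at hv
  obtain ⟨κ, T, w, z, hw0, hw1, hz, hcm⟩ := hv
  have hv' : v = ∑ j ∈ T, w j • z j := by
    rw [← hcm, Finset.centerMass, hw1]
    simp
  -- choose witnesses
  have hwit : ∀ j : {j // j ∈ T}, ∃ h : X, ∀ i, Fa i h ≤ z (j : κ) i := fun j => hz j j.2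
  choose H hH using hwit
  set N : ℕ := T.card with hN
  have hTne : T.Nonempty := by
    rcases T.eq_empty_or_nonempty with rfl | h
    · simp at hw1
    · exact h
  have hNpos : 0 < N := Finset.card_pos.2 hTne
  haveI : Nonempty (Fin N) := ⟨⟨0, hNpos⟩⟩
  set e : {j // j ∈ T} ≃ Fin N := T.equivFin with he
  set tw : Fin N → ℝ := fun a => w (e.symm a) with htw
  set th : Fin N → X := fun a => H (e.symm a) with hth
  set tz : Fin N → (ι → ℝ) := fun a => z (e.symm a) with htz
  have htw0 : ∀ a, 0 ≤ tw a := fun a => hw0 _ (e.symm a).2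
  have hsum1 : ∑ a, tw a = 1 := by
    rw [htw]
    rw [Equiv.sum_comp e.symm (fun j : {j // j ∈ T} => w (j : κ))]
    rw [← hw1]
    exact T.sum_coe_sort w
  have htw1 : ∀ a, tw a ≤ 1 := by
    intro a
    rw [← hsum1]
    exact Finset.single_le_sum (fun b _ => htw0 b) (Finset.mem_univ a)
  have hvi : ∀ i, ∑ a, tw a * tz a i = v i := by
    intro i
    rw [hv']
    rw [Finset.sum_apply]
    have h1 : ∑ a, tw a * tz a i = ∑ j : {j // j ∈ T}, w (j:κ) * z (j:κ) i := by
      rw [htw, htz]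
      exact Equiv.sum_comp e.symm (fun j : {j // j ∈ T} => w (j:κ) * z (j:κ) i)
    rw [h1]
    rw [show ∑ j : {j // j ∈ T}, w (j:κ) * z (j:κ) i
        = ∑ j ∈ T, w j * z j i from T.sum_coe_sort (fun j => w j * z j i)]
    exact Finset.sum_congr rfl fun j _ => by simp
  have hband : ∀ (i : ι) (a : Fin N), Fa i (th a) ≤ tz a i := fun i a => hH (e.symm a) i
  -- δ := min of -v i, positive
  set δ : ℝ := Finset.univ.inf' Finset.univ_nonempty (fun i => -(v i)) with hδ
  have hδpos : 0 < δ := by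
    rw [hδ, Finset.lt_inf'_iff]
    intro i _
    have := hcon i
    linarith
  have hδle : ∀ i, v i ≤ -δ := by
    intro i
    have : δ ≤ -(v i) := Finset.inf'_le _ (Finset.mem_univ i)
    linarith
  -- B := uniform bound on the |Fa i (th a)|
  haveI : Nonempty (ι × Fin N) := ⟨(Classical.arbitrary ι, ⟨0, hNpos⟩)⟩
  set B : ℝ := 1 + Finset.univ.sup' Finset.univ_nonempty
    (fun q : ι × Fin N => |Fa q.1 (th q.2)|) with hB
  have hBpos : 0 < B := by
    rw [hB]
    have : (0:ℝ) ≤ Finset.univ.sup' Finset.univ_nonempty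
        (fun q : ι × Fin N => |Fa q.1 (th q.2)|) := by
      obtain ⟨q⟩ : Nonempty (ι × Fin N) := inferInstance
      exact le_trans (abs_nonneg _)
        (Finset.le_sup' (fun q : ι × Fin N => |Fa q.1 (th q.2)|) (Finset.mem_univ q))
    linarith
  have hBle : ∀ (i : ι) (a : Fin N), |Fa i (th a)| ≤ B := by
    intro i a
    rw [hB]
    have := Finset.le_sup' (fun q : ι × Fin N => |Fa q.1 (th q.2)|) (Finset.mem_univ (i, a))
    simpa using le_trans this (by linarith)
  -- choose n large
  have hp' : (1:ℝ) < (p:ℝ) := by exact_mod_cast hp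
  obtain ⟨nn, hnn⟩ := pow_unbounded_of_one_lt
    ((N:ℝ) * (2*N+1) * B / δ + (N + 1)) hp'
  set P : ℕ := p ^ nn with hP
  have hPcast : ((P:ℕ):ℝ) = (p:ℝ) ^ nn := by push_cast [hP]; ring
  have hPbig : (N:ℝ) * (2*N+1) * B / δ + (N + 1) < (P:ℝ) := by rw [hPcast]; exact hnn
  have hPN : (N:ℝ) + 1 ≤ (P:ℝ) := by
    have h1 : 0 ≤ (N:ℝ) * (2*N+1) * B / δ := by positivity
    linarith
  have hPNnat : N + 1 ≤ P := by exact_mod_cast hPN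
  set Q : ℕ := P - N with hQ
  have hQcast : (Q:ℝ) = (P:ℝ) - N := by
    rw [hQ]
    have : N ≤ P := by omega
    push_cast [Nat.cast_sub this]
    ring
  -- the approximating positive integer weights
  set m' : Fin N → ℕ := fun a => ⌊tw a * Q⌋₊ + 1 with hm'
  have hm'lb : ∀ a, tw a * Q < (m' a : ℝ) := by
    intro a
    rw [hm']
    push_cast
    exact Nat.lt_floor_add_one _
  have hm'ub : ∀ a, (m' a : ℝ) ≤ tw a * Q + 1 := by
    intro a
    rw [hm']
    push_cast
    have : (⌊tw a * Q⌋₊ : ℝ) ≤ tw a * Q := Nat.floor_le (mul_nonneg (htw0 a) (Nat.cast_nonneg _))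
    linarith
  have hSm'ub : ((∑ a, m' a : ℕ) : ℝ) ≤ (Q:ℝ) + N := by
    rw [Nat.cast_sum]
    calc ∑ a, (m' a : ℝ) ≤ ∑ a, (tw a * Q + 1) := Finset.sum_le_sum fun a _ => hm'ub a
      _ = (∑ a, tw a) * Q + N := by
          rw [Finset.sum_add_distrib, ← Finset.sum_mul]
          simp [card_univ]
      _ = (Q:ℝ) + N := by rw [hsum1]; ring
  have hSm'lb : (Q:ℝ) ≤ ((∑ a, m' a : ℕ) : ℝ) := by
    rw [Nat.cast_sum]
    calc (Q:ℝ) = (∑ a, tw a) * Q := by rw [hsum1]; ring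
      _ = ∑ a, tw a * Q := by rw [Finset.sum_mul]
      _ ≤ ∑ a, (m' a : ℝ) := Finset.sum_le_sum fun a _ => (hm'lb a).le
  have hSm'P : ∑ a, m' a ≤ P := by
    have h1 : ((∑ a, m' a : ℕ) : ℝ) ≤ (P:ℝ) := by
      rw [hQcast] at hSm'ub
      linarith
    exact_mod_cast h1
  set d : ℕ := P - ∑ a, m' a with hd
  have hdcast : (d:ℝ) = (P:ℝ) - ((∑ a, m' a : ℕ):ℝ) := by
    rw [hd, Nat.cast_sub hSm'P]
  have hdN : (d:ℝ) ≤ N := by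
    rw [hdcast]
    rw [hQcast] at hSm'lb
    linarith
  set a₀ : Fin N := ⟨0, hNpos⟩ with ha₀
  set m : Fin N → ℕ := Function.update m' a₀ (m' a₀ + d) with hm
  have hm'pos : ∀ a, 0 < m' a := fun a => Nat.succ_pos _
  have hmpos : ∀ a, 0 < m a := by
    intro a
    rw [hm]
    rcases eq_or_ne a a₀ with rfl | hne
    · rw [Function.update_self]
      exact Nat.lt_of_lt_of_le (hm'pos _) (Nat.le_add_right _ _)
    · rw [Function.update_of_ne hne]
      exact hm'pos a
  have hmsum : ∑ a, m a = P := by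
    have h0 : ∑ a, m a = (m' a₀ + d) + ∑ a ∈ Finset.univ.erase a₀, m' a := by
      rw [hm, Finset.sum_update_of_mem (Finset.mem_univ a₀), Finset.sdiff_singleton_eq_erase]
    have h1 : m' a₀ + ∑ a ∈ Finset.univ.erase a₀, m' a = ∑ a, m' a :=
      Finset.add_sum_erase _ m' (Finset.mem_univ a₀)
    omega
  have herr : ∀ a, |(m a : ℝ) - tw a * P| ≤ 2*N+1 := by
    intro a
    have hbase : |(m' a : ℝ) - tw a * P| ≤ N + 1 := by
      have h1 : tw a * P - tw a * N ≤ tw a * Q + 1 := by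
        rw [hQcast]; ring_nf; nlinarith [htw0 a]
      have h2 : tw a * (P:ℝ) = tw a * Q + tw a * N := by
        rw [hQcast]; ring
      have h3 := hm'lb a
      have h4 := hm'ub a
      have h5 : 0 ≤ tw a * (N:ℝ) := mul_nonneg (htw0 a) (Nat.cast_nonneg _)
      have h6 : tw a * (N:ℝ) ≤ N := by
        have := htw1 a
        nlinarith [Nat.cast_nonneg (α := ℝ) N]
      rw [abs_le]
      constructor <;> nlinarith
    rcases eq_or_ne a a₀ with rfl | hne
    · have hma : (m a₀ : ℝ) = (m' a₀ : ℝ) + d := by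
        rw [hm, Function.update_self]; push_cast; ring
      rw [hma]
      obtain ⟨hb1, hb2⟩ := abs_le.1 hbase
      have hd0 : (0:ℝ) ≤ d := Nat.cast_nonneg d
      rw [abs_le]
      constructor
      · linarith
      · linarith [hdN]
    · have hma : (m a : ℝ) = (m' a : ℝ) := by rw [hm, Function.update_of_ne hne]
      rw [hma]
      have h7 : (0:ℝ) ≤ (N:ℝ) := Nat.cast_nonneg N
      calc |(m' a : ℝ) - tw a * P| ≤ N + 1 := hbase
        _ ≤ 2*N+1 := by linarith
  -- the divided point
  set x : X := s^[nn] (∑ a, m a • th a) with hx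
  have hxdiv : (∑ a, m a) • x = ∑ a, m a • th a := by
    rw [hmsum, hx, hP]
    exact iter_smul hs nn _
  -- convexity at x for each i gives a contradiction
  have hFx : ∀ i, Fa i x < 0 := by
    intro i
    have hconv := hFa i N hNpos m hmpos th x hxdiv
    rw [hmsum] at hconv
    have hterm : ∀ a, (m a : ℝ) * Fa i (th a) ≤ tw a * Fa i (th a) * P + (2*N+1) * B := by
      intro a
      have h1 : (m a : ℝ) * Fa i (th a)
          = tw a * Fa i (th a) * P + ((m a : ℝ) - tw a * P) * Fa i (th a) := by ring
      rw [h1]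
      have h2 : ((m a : ℝ) - tw a * P) * Fa i (th a) ≤ (2*N+1) * B := by
        calc ((m a : ℝ) - tw a * P) * Fa i (th a)
            ≤ |((m a : ℝ) - tw a * P) * Fa i (th a)| := le_abs_self _
          _ = |(m a : ℝ) - tw a * P| * |Fa i (th a)| := abs_mul _ _
          _ ≤ (2*N+1) * B := by
              have := herr a
              have := hBle i a
              have h3 : (0:ℝ) ≤ |(m a : ℝ) - tw a * P| := abs_nonneg _
              nlinarith [abs_nonneg (Fa i (th a))]
      linarith
    have hsum2 : ∑ a, (m a : ℝ) * Fa i (th a)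
        ≤ (∑ a, tw a * Fa i (th a)) * P + N * ((2*N+1) * B) := by
      calc ∑ a, (m a : ℝ) * Fa i (th a)
          ≤ ∑ a, (tw a * Fa i (th a) * P + (2*N+1) * B) :=
            Finset.sum_le_sum fun a _ => hterm a
        _ = (∑ a, tw a * Fa i (th a)) * P + N * ((2*N+1) * B) := by
            rw [Finset.sum_add_distrib, ← Finset.sum_mul]
            simp [card_univ]
    have hsum3 : ∑ a, tw a * Fa i (th a) ≤ -δ := by
      calc ∑ a, tw a * Fa i (th a) ≤ ∑ a, tw a * tz a i :=
            Finset.sum_le_sum fun a _ => mul_le_mul_of_nonneg_left (hband i a) (htw0 a)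
        _ = v i := hvi i
        _ ≤ -δ := hδle i
    have hPpos : (0:ℝ) < (P:ℝ) := by
      rw [hPcast]; positivity
    have hfinal : ((P:ℕ):ℝ) * Fa i x < 0 := by
      have h8 : (N:ℝ) * ((2*N+1) * B) < δ * P := by
        have h9 : (N:ℝ) * (2*N+1) * B / δ < (P:ℝ) := by
          have h10 : (0:ℝ) ≤ (N:ℝ) + 1 := by positivity
          linarith
        rw [div_lt_iff₀ hδpos] at h9
        nlinarith
      calc ((P:ℕ):ℝ) * Fa i x ≤ ∑ a, (m a : ℝ) * Fa i (th a) := hconv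
        _ ≤ (∑ a, tw a * Fa i (th a)) * P + N * ((2*N+1) * B) := hsum2
        _ ≤ (-δ) * P + N * ((2*N+1) * B) := by nlinarith [hsum3, hPpos]
        _ < 0 := by nlinarith
    have : (0:ℝ) < ((P:ℕ):ℝ) := hPpos
    nlinarith
  obtain ⟨i, hi⟩ := hpos x
  exact absurd hi (not_le.2 (hFx i))

end

end SDMax

open SDMax Finset in
set_option maxHeartbeats 2000000 in
/-- Subdifferential of a maximum via Lagrange multipliers: for convex `f₁, …, f_k` on a
semidivisible group and `f = max fᵢ`, an additive `φ` lies in `∂f(x₀)` iff it is a convex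
combination `φ = Σ λᵢ aᵢ` with nonnegative weights `λᵢ` summing to `1`, vanishing off the
active index set `I(x₀) = {i : fᵢ(x₀) = f(x₀)}`, and `aᵢ ∈ ∂fᵢ(x₀)` for active `i`. -/
theorem subdiff_max {X : Type*} [AddCommGroup X]
    (hdiv : ∃ p : ℕ, p.Prime ∧ Function.Surjective fun x : X => p • x)
    (k : ℕ) (hk : 0 < k) (f : Fin k → X → ℝ) (hf : ∀ i, RConvexFn (f i)) (x₀ : X)
    (φ : X → ℝ) (hφ : ∀ x y, φ (x + y) = φ x + φ y) :
    φ ∈ subdiff (fun x =>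
        Finset.univ.sup' (Finset.univ_nonempty_iff.mpr ⟨⟨0, hk⟩⟩) fun i => f i x) x₀ ↔
      ∃ (lam : Fin k → ℝ) (a : Fin k → X → ℝ),
        (∀ i, 0 ≤ lam i) ∧ (∑ i, lam i = 1) ∧
        (∀ i, f i x₀ ≠
            (Finset.univ.sup' (Finset.univ_nonempty_iff.mpr ⟨⟨0, hk⟩⟩) fun j => f j x₀) →
          lam i = 0) ∧
        (∀ i, f i x₀ =
            (Finset.univ.sup' (Finset.univ_nonempty_iff.mpr ⟨⟨0, hk⟩⟩) fun j => f j x₀) →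
          a i ∈ subdiff (f i) x₀) ∧
        ∀ x, φ x = ∑ i, lam i * a i x := by
  classical
  have ne1 : (Finset.univ : Finset (Fin k)).Nonempty := Finset.univ_nonempty_iff.mpr ⟨⟨0, hk⟩⟩
  set M₀ : ℝ := Finset.univ.sup' (Finset.univ_nonempty_iff.mpr ⟨⟨0, hk⟩⟩)
    (fun j => f j x₀) with hM₀
  have hφ0 : φ 0 = 0 := by
    have := hφ 0 0
    simpa using this.symm
  set ψ : X →+ ℝ := AddMonoidHom.mk' φ (fun x y => hφ x y) with hψ
  have hψφ : ∀ x, ψ x = φ x := fun x => rfl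
  constructor
  · -- hard direction
    intro hmem
    obtain ⟨-, hφle⟩ := hmem
    obtain ⟨p, hpp, hsur⟩ := hdiv
    have hp2 : 1 < p := hpp.one_lt
    set s : X → X := Function.surjInv hsur with hsdef
    have hs : ∀ x, p • s x = x := fun x => Function.surjInv_eq hsur x
    set F : Fin k → X → ℝ := fun i h => f i (x₀ + h) - M₀ - φ h with hFdef
    have hFval : ∀ i h, F i h = f i (x₀ + h) - M₀ - φ h := fun i h => rfl
    -- convexity of the F i
    have hFconv : ∀ i, RConvexFn (F i) := by
      intro i n hn m hm xs x hx
      have h1 := hf i n hn m hm (fun j => x₀ + xs j) (x₀ + x) (by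
        rw [smul_add, hx, Finset.sum_smul, ← Finset.sum_add_distrib]
        exact Finset.sum_congr rfl fun j _ => (smul_add (m j) x₀ (xs j)).symm)
      have h2 : φ ((∑ j, m j) • x) = ∑ j, (m j : ℝ) * φ (xs j) := by
        rw [hx, ← hψφ, map_sum]
        exact Finset.sum_congr rfl fun j _ => by
          rw [map_nsmul, nsmul_eq_mul, hψφ]
      have h3 : ((∑ j, m j : ℕ) : ℝ) * φ x = ∑ j, (m j : ℝ) * φ (xs j) := by
        have h3a : ψ ((∑ j, m j) • x) = ((∑ j, m j : ℕ) : ℝ) * φ x := by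
          rw [map_nsmul, nsmul_eq_mul, hψφ]
        rw [← h3a, hψφ, h2]
      have h5 : (∑ j, (m j : ℝ)) = ((∑ j, m j : ℕ) : ℝ) := by
        rw [Nat.cast_sum]
      have h4 : ∑ j, (m j : ℝ) * (F i (xs j))
          = (∑ j, (m j : ℝ) * f i (x₀ + xs j)) - ((∑ j, m j : ℕ) : ℝ) * M₀
            - ∑ j, (m j : ℝ) * φ (xs j) := by
        have he : ∀ j, (m j : ℝ) * (F i (xs j))
            = (m j : ℝ) * f i (x₀ + xs j) - (m j : ℝ) * M₀ - (m j : ℝ) * φ (xs j) := by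
          intro j
          rw [hFval]
          ring
        rw [Finset.sum_congr rfl fun j _ => he j]
        rw [Finset.sum_sub_distrib, Finset.sum_sub_distrib, ← Finset.sum_mul, h5]
      rw [h4, hFval]
      have h6 : ((∑ j, m j : ℕ) : ℝ) * (f i (x₀ + x) - M₀ - φ x)
          = ((∑ j, m j : ℕ) : ℝ) * f i (x₀ + x) - ((∑ j, m j : ℕ) : ℝ) * M₀
            - ((∑ j, m j : ℕ) : ℝ) * φ x := by ring
      rw [h6]
      rw [h3]
      linarith [h1]
    have hF0le : ∀ i, F i 0 = f i x₀ - M₀ := by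
      intro i
      rw [hFval, add_zero, hφ0]
      ring
    -- the max of the F i is ≥ 0 everywhere
    have hmax : ∀ h, ∃ i, 0 ≤ F i h := by
      intro h
      obtain ⟨i, -, hi⟩ := Finset.exists_mem_eq_sup' ne1 (fun j => f j (x₀ + h))
      refine ⟨i, ?_⟩
      have h6 : M₀ + φ h ≤ Finset.univ.sup' ne1 (fun j => f j (x₀ + h)) := hφle h
      rw [hi] at h6
      rw [hFval]
      linarith
    -- Step 1 : the max over *active* indices is ≥ 0 everywhere
    have hact : ∀ h, ∃ i, f i x₀ = M₀ ∧ 0 ≤ F i h := by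
      intro h
      have hexn : ∃ n : ℕ, ∀ i, F i 0 < 0 → F i h + ((p:ℝ)^n - 1) * F i 0 < 0 := by
        set A : ℝ := Finset.univ.sup' ne1
          (fun i => if F i 0 < 0 then F i h / (-(F i 0)) else 0) with hA
        obtain ⟨n, hn⟩ := pow_unbounded_of_one_lt (A + 1)
          (show (1:ℝ) < (p:ℝ) by exact_mod_cast hp2)
        refine ⟨n, fun i hFi0 => ?_⟩
        have h1 : F i h / (-(F i 0)) ≤ A := by
          have h2 := Finset.le_sup' (f := fun i => if F i 0 < 0 then F i h / (-(F i 0)) else 0)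
            (Finset.mem_univ i)
          rw [if_pos hFi0] at h2
          exact h2
        have h2 : (0:ℝ) < -(F i 0) := by linarith
        have h3 : F i h / (-(F i 0)) < (p:ℝ)^n - 1 := lt_of_le_of_lt h1 (by linarith)
        rw [div_lt_iff₀ h2] at h3
        nlinarith
      obtain ⟨n, hn⟩ := hexn
      obtain ⟨i, hi⟩ := hmax (s^[n] h)
      have hpow1 : 1 ≤ p ^ n := Nat.one_le_pow _ _ (by omega)
      have hsplit : 1 + (p ^ n - 1) = p ^ n := by omega
      have hpair := conv_pair (hFconv i) (m := 1) (t := p ^ n - 1) one_pos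
        (x := s^[n] h) (u := h) (by
          rw [hsplit, one_smul, iter_smul hs n h])
      have hc1 : ((1 + (p ^ n - 1) : ℕ) : ℝ) = (p:ℝ)^n := by
        rw [hsplit]; push_cast; ring
      have hc2 : ((p ^ n - 1 : ℕ) : ℝ) = (p:ℝ)^n - 1 := by
        rw [Nat.cast_sub hpow1]; push_cast; ring
      rw [hc1, hc2] at hpair
      norm_num at hpair
      have hppow : (0:ℝ) < (p:ℝ)^n := by positivity
      have hiact : f i x₀ = M₀ := by
        by_contra hne
        have hFi0 : F i 0 < 0 := by
          have hle : f i x₀ ≤ M₀ := Finset.le_sup' (fun j => f j x₀) (Finset.mem_univ i)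
          rw [hF0le]
          rcases lt_or_eq_of_le hle with hlt | heq
          · linarith
          · exact absurd heq hne
        have h4 := hn i hFi0
        nlinarith
      have hFi00 : F i 0 = 0 := by rw [hF0le, hiact]; ring
      rw [hFi00] at hpair
      refine ⟨i, hiact, ?_⟩
      nlinarith
    -- the active index subtype
    set ι : Type _ := {i : Fin k // f i x₀ = M₀} with hι
    haveI : Nonempty ι := by
      obtain ⟨i, -, hi⟩ := Finset.exists_mem_eq_sup' ne1 (fun j => f j x₀)
      exact ⟨⟨i, hi.symm⟩⟩
    set Fa : ι → X → ℝ := fun i => F i.1 with hFa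
    have hFa0 : ∀ i : ι, Fa i 0 = 0 := fun i => by
      rw [hFa]
      show F i.1 0 = 0
      rw [hF0le, i.2]; ring
    have hposF : ∀ h, ∃ i : ι, 0 ≤ Fa i h := by
      intro h
      obtain ⟨i, hiact, hile⟩ := hact h
      exact ⟨⟨i, hiact⟩, hile⟩
    -- separation
    obtain ⟨lam', hlam'0, hlam'1, hlam'C⟩ := separation
      {v : ι → ℝ | ∃ h, ∀ i, Fa i h ≤ v i}
      (hull_nonneg hp2 hs Fa (fun i => hFconv i.1) hposF)
    have hFpos : ∀ h, 0 ≤ ∑ i, lam' i * Fa i h := fun h =>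
      hlam'C _ ⟨h, fun i => le_rfl⟩
    -- pass to the subadditive derivatives
    set D : ι → X → ℝ := fun i => Dfun p s (Fa i) with hD
    have hDsub : ∀ i : ι, ∀ x y, D i (x + y) ≤ D i x + D i y := fun i x y =>
      Dfun_subadd hp2 hs (hFconv i.1) (hFa0 i) x y
    have hD0 : ∀ i : ι, D i 0 = 0 := fun i => Dfun_zero hp2 hs (hFconv i.1) (hFa0 i)
    have hDleF : ∀ (i : ι) (h : X), D i h ≤ Fa i h := fun i h =>
      Dfun_le_self hp2 hs (hFconv i.1) (hFa0 i) h
    have hDpos : ∀ h, 0 ≤ ∑ i, lam' i * D i h := by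
      intro h
      have hgoal : ∀ ε : ℝ, 0 < ε → -ε ≤ ∑ i, lam' i * D i h := by
        intro ε hε
        have hch : ∀ i : ι, ∃ n, cSeq p s (Fa i) n h < D i h + ε := by
          intro i
          obtain ⟨v, ⟨n, rfl⟩, hv⟩ := exists_lt_of_csInf_lt (Set.range_nonempty _)
            (lt_add_of_pos_right (D i h) hε)
          exact ⟨n, hv⟩
        choose g hg using hch
        set Nn : ℕ := Finset.univ.sup g with hNn
        have h1 : ∀ i : ι, cSeq p s (Fa i) Nn h ≤ D i h + ε := fun i =>
          le_trans (cSeq_anti hp2 hs (hFconv i.1) (hFa0 i) h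
            (Finset.le_sup (Finset.mem_univ i))) (hg i).le
        have h2 : 0 ≤ ∑ i, lam' i * cSeq p s (Fa i) Nn h := by
          have he : ∑ i, lam' i * cSeq p s (Fa i) Nn h
              = (p:ℝ)^Nn * ∑ i, lam' i * Fa i (s^[Nn] h) := by
            rw [Finset.mul_sum]
            exact Finset.sum_congr rfl fun i _ => by
              show lam' i * ((p:ℝ)^Nn * Fa i (s^[Nn] h)) = _
              ring
          rw [he]
          exact mul_nonneg (by positivity) (hFpos (s^[Nn] h))
        have h3 : ∑ i, lam' i * cSeq p s (Fa i) Nn h ≤ (∑ i, lam' i * D i h) + ε := by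
          calc ∑ i, lam' i * cSeq p s (Fa i) Nn h
              ≤ ∑ i, lam' i * (D i h + ε) := Finset.sum_le_sum fun i _ =>
                mul_le_mul_of_nonneg_left (h1 i) (hlam'0 i)
            _ = (∑ i, lam' i * D i h) + (∑ i, lam' i) * ε := by
                rw [Finset.sum_mul, ← Finset.sum_add_distrib]
                exact Finset.sum_congr rfl fun i _ => by ring
            _ = (∑ i, lam' i * D i h) + ε := by rw [hlam'1]; ring
        linarith
      by_contra hcon
      push_neg at hcon
      have := hgoal (-(∑ i, lam' i * D i h) / 2) (by linarith)
      linarith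
    -- decomposition
    obtain ⟨b, hb, hbsum⟩ := decomp (Finset.univ : Finset ι) lam' hlam'0 D hDsub hD0
      (fun _ => (0:ℝ)) (fun x y => by norm_num) (fun x => by simpa using hDpos x)
    -- assemble
    set lam : Fin k → ℝ := fun i => if hi : f i x₀ = M₀ then lam' ⟨i, hi⟩ else 0 with hlamdef
    set aa : Fin k → X → ℝ := fun i =>
      if hi : f i x₀ = M₀ then (fun x => φ x + b ⟨i, hi⟩ x) else fun _ => 0 with haadef
    have hlamcoe : ∀ i : ι, lam (i : Fin k) = lam' i := by
      intro i
      rw [hlamdef]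
      show (if hi : f (i:Fin k) x₀ = M₀ then lam' ⟨(i:Fin k), hi⟩ else 0) = lam' i
      rw [dif_pos i.2]
    have haacoe : ∀ (i : ι) (x : X), aa (i : Fin k) x = φ x + b i x := by
      intro i x
      rw [haadef]
      show (if hi : f (i:Fin k) x₀ = M₀ then (fun x => φ x + b ⟨(i:Fin k), hi⟩ x)
        else fun _ => 0) x = φ x + b i x
      rw [dif_pos i.2]
    have hlamzero : ∀ i : Fin k, f i x₀ ≠ M₀ → lam i = 0 := by
      intro i hi
      rw [hlamdef]
      show (if h : f i x₀ = M₀ then lam' ⟨i, h⟩ else 0) = 0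
      rw [dif_neg hi]
    have hfilter : ∀ (u : Fin k → ℝ), (∀ i, f i x₀ ≠ M₀ → u i = 0) →
        ∑ i, u i = ∑ i : ι, u (i : Fin k) := by
      intro u hu
      rw [← Finset.sum_filter_of_ne (p := fun i => f i x₀ = M₀)
        (fun i _ hine => by
          by_contra hcon
          exact hine (hu i hcon))]
      exact Finset.sum_subtype _ (by simp) u
    refine ⟨lam, aa, ?_, ?_, hlamzero, ?_, ?_⟩
    · intro i
      rw [hlamdef]
      show 0 ≤ if hi : f i x₀ = M₀ then lam' ⟨i, hi⟩ else 0
      split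
      · exact hlam'0 _
      · exact le_rfl
    · rw [hfilter lam hlamzero, ← hlam'1]
      exact Finset.sum_congr rfl fun i _ => hlamcoe i
    · intro i hi
      have hadd := (hb ⟨i, hi⟩ (Finset.mem_univ _)).1
      have hle := (hb ⟨i, hi⟩ (Finset.mem_univ _)).2
      constructor
      · intro x y
        have h7 : aa i = fun x => φ x + b ⟨i, hi⟩ x := by
          rw [haadef]
          show (if h : f i x₀ = M₀ then (fun x => φ x + b ⟨i, h⟩ x) else fun _ => 0)
            = fun x => φ x + b ⟨i, hi⟩ x
          rw [dif_pos hi]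
        rw [h7]
        show φ (x + y) + b ⟨i, hi⟩ (x + y) = (φ x + b ⟨i, hi⟩ x) + (φ y + b ⟨i, hi⟩ y)
        rw [hφ, hadd x y]
        ring
      · intro h
        have h7 : aa i h = φ h + b ⟨i, hi⟩ h := haacoe ⟨i, hi⟩ h
        rw [h7]
        have h8 : b ⟨i, hi⟩ h ≤ D ⟨i, hi⟩ h := hle h
        have h9 : D ⟨i, hi⟩ h ≤ Fa ⟨i, hi⟩ h := hDleF ⟨i, hi⟩ h
        have h10 : Fa ⟨i, hi⟩ h = f i (x₀ + h) - M₀ - φ h := rfl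
        rw [h10] at h9
        have h11 : f i x₀ = M₀ := hi
        linarith
    · intro x
      have h12 : ∀ i : Fin k, f i x₀ ≠ M₀ → lam i * aa i x = 0 := fun i hi => by
        rw [hlamzero i hi]; ring
      have h13 : ∑ i, lam i * aa i x = ∑ i : ι, lam (i : Fin k) * aa (i : Fin k) x :=
        hfilter (fun i => lam i * aa i x) h12
      rw [h13]
      have h14 : ∑ i : ι, lam (i : Fin k) * aa (i : Fin k) x
          = ∑ i : ι, lam' i * (φ x + b i x) := by
        exact Finset.sum_congr rfl fun i _ => by rw [hlamcoe i, haacoe i x]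
      rw [h14]
      have h15 : ∑ i : ι, lam' i * (φ x + b i x)
          = (∑ i : ι, lam' i) * φ x + ∑ i : ι, lam' i * b i x := by
        rw [Finset.sum_mul, ← Finset.sum_add_distrib]
        exact Finset.sum_congr rfl fun i _ => by ring
      rw [h15, hlam'1, hbsum x]
      ring
  · -- easy direction
    rintro ⟨lam, a, hlam0, hlam1, hvanish, hsubd, hrep⟩
    refine ⟨hφ, fun h => ?_⟩
    show M₀ + φ h ≤ Finset.univ.sup' ne1 (fun j => f j (x₀ + h))
    set S : ℝ := Finset.univ.sup' ne1 (fun j => f j (x₀ + h)) with hS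
    have hkey : M₀ + φ h = ∑ i, lam i * (M₀ + a i h) := by
      have h1 : ∑ i, lam i * (M₀ + a i h) = (∑ i, lam i) * M₀ + ∑ i, lam i * a i h := by
        rw [Finset.sum_mul, ← Finset.sum_add_distrib]
        exact Finset.sum_congr rfl fun i _ => by ring
      rw [h1, hlam1, hrep h]
      ring
    rw [hkey]
    have hterm : ∀ i : Fin k, lam i * (M₀ + a i h) ≤ lam i * S := by
      intro i
      rcases eq_or_lt_of_le (hlam0 i) with h0 | hpos
      · rw [← h0]; ring_nf; exact le_rfl
      · have hiact : f i x₀ = M₀ := by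
          by_contra hne
          rw [hvanish i hne] at hpos
          exact lt_irrefl _ hpos
        obtain ⟨-, hsub2⟩ := hsubd i hiact
        have h2 : f i x₀ + a i h ≤ f i (x₀ + h) := hsub2 h
        have h3 : f i (x₀ + h) ≤ S :=
          Finset.le_sup' (fun j => f j (x₀ + h)) (Finset.mem_univ i)
        have h4 : M₀ + a i h ≤ S := by rw [← hiact]; linarith
        exact mul_le_mul_of_nonneg_left h4 hpos.le
    calc ∑ i, lam i * (M₀ + a i h) ≤ ∑ i, lam i * S :=
          Finset.sum_le_sum fun i _ => hterm i
      _ = S := by rw [← Finset.sum_mul, hlam1]; ring
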